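/- There is an absolute constant C such that for every integer c ≥ 0 there exists a DFA over the alphabet {0,1}×{0,1} with at most C·(log₂(c+1)+1) states that accepts a word w if and only if, writing x for the word of first components of w and y for the word of second components, both x and y are valid Fibonacci representations and [x] + c = [y]. -/

import Mathlib

/-- The Fibonacci (Zeckendorf) value of a binary word written msd-first:
`[x₁⋯x_ℓ] = Σ_j x_j · F_{ℓ−j+2}`. -/
def fibVal : List Bool → ℕ
  | [] => 0
  | a :: rest => (if a then Nat.fib (rest.length + 2) else 0) + fibVal rest

/-- A binary word is a valid Fibonacci representation if it has no factor `11`. -/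
def ValidFib (w : List Bool) : Prop :=
  w.Chain' (fun a b => a = false ∨ b = false)

noncomputable section

namespace FibAux


def gr : ℝ := (1 + Real.sqrt 5) / 2

lemma sqrt5_sq : Real.sqrt 5 ^ 2 = 5 := Real.sq_sqrt (by norm_num)
lemma sqrt5_gt : (2.2 : ℝ) < Real.sqrt 5 := by
  nlinarith [sqrt5_sq, Real.sqrt_nonneg 5]
lemma sqrt5_lt : Real.sqrt 5 < 2.3 := by
  nlinarith [sqrt5_sq, Real.sqrt_nonneg 5]

lemma gr_sq : gr ^ 2 = gr + 1 := by
  unfold gr; nlinarith [sqrt5_sq]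
lemma gr_gt : (1.6 : ℝ) < gr := by unfold gr; nlinarith [sqrt5_gt]
lemma gr_lt : gr < 1.7 := by unfold gr; nlinarith [sqrt5_lt]
lemma gr_pos : (0:ℝ) < gr := by linarith [gr_gt]
lemma one_lt_gr : (1:ℝ) < gr := by linarith [gr_gt]

lemma gr_pow_le_fib : ∀ n : ℕ, gr ^ n ≤ (Nat.fib (n + 2) : ℝ)
  | 0 => by norm_num
  | 1 => by
      have : (Nat.fib 3 : ℝ) = 2 := by norm_num [Nat.fib]
      rw [pow_one, this]; linarith [gr_lt]
  | (n + 2) => by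
      have h1 := gr_pow_le_fib (n + 1)
      have h0 := gr_pow_le_fib n
      have hf : (Nat.fib (n + 4) : ℝ) = Nat.fib (n + 3) + Nat.fib (n + 2) := by
        have := Nat.fib_add_two (n := n + 2); push_cast [this]; ring
      have : gr ^ (n + 2) = gr ^ (n + 1) + gr ^ n := by
        have : gr ^ (n + 2) = gr ^ n * gr ^ 2 := by ring
        rw [this, gr_sq]; ring
      rw [this]
      calc gr ^ (n+1) + gr ^ n ≤ (Nat.fib (n+3) : ℝ) + Nat.fib (n+2) := by
            have : n + 1 + 2 = n + 3 := by ring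
            rw [this] at h1; linarith
        _ = (Nat.fib (n + 4) : ℝ) := hf.symm

lemma fib_le_gr_pow : ∀ n : ℕ, (Nat.fib (n + 1) : ℝ) ≤ gr ^ n
  | 0 => by norm_num
  | 1 => by rw [pow_one]; norm_num; linarith [gr_gt]
  | (n + 2) => by
      have h1 := fib_le_gr_pow (n + 1)
      have h0 := fib_le_gr_pow n
      have hf : (Nat.fib (n + 3) : ℝ) = Nat.fib (n + 2) + Nat.fib (n + 1) := by
        have := Nat.fib_add_two (n := n + 1); push_cast [this]; ring
      have hg : gr ^ (n + 2) = gr ^ (n + 1) + gr ^ n := by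
        have : gr ^ (n + 2) = gr ^ n * gr ^ 2 := by ring
        rw [this, gr_sq]; ring
      rw [hg]
      have : n + 1 + 1 = n + 2 := by ring
      rw [this] at h1
      linarith [hf.le, hf.ge]

lemma gr_pow_fib : ∀ n : ℕ, gr ^ (n + 1) = gr * (Nat.fib (n + 1) : ℝ) + (Nat.fib n : ℝ)
  | 0 => by norm_num
  | (n + 1) => by
      have ih := gr_pow_fib n
      have hf : (Nat.fib (n + 2) : ℝ) = Nat.fib n + Nat.fib (n + 1) := by
        have := Nat.fib_add_two (n := n); push_cast [this]; ring
      have : gr ^ (n + 2) = gr * gr ^ (n + 1) := by ring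
      rw [this, ih, hf, mul_add]
      have h2 : gr * gr = gr + 1 := by have := gr_sq; nlinarith []
      nlinarith [h2]


@[simp] lemma fibVal_nil : fibVal [] = 0 := rfl
lemma fibVal_cons (a : Bool) (r : List Bool) :
    fibVal (a :: r) = (if a then Nat.fib (r.length + 2) else 0) + fibVal r := rfl

lemma validFib_tail {a : Bool} {r : List Bool} (h : ValidFib (a :: r)) : ValidFib r :=
  List.IsChain.tail h

lemma fibVal_lt : ∀ u : List Bool, ValidFib u → fibVal u < Nat.fib (u.length + 2)
  | [], _ => by simp [Nat.fib]
  | false :: r, h => by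
      have hr := fibVal_lt r (validFib_tail h)
      have hm : Nat.fib (r.length + 2) ≤ Nat.fib (r.length + 1 + 2) :=
        Nat.fib_mono (by omega)
      simp only [fibVal_cons, if_neg (by simp : ¬(false = true)), List.length_cons]
      omega
  | [true], _ => by simp [fibVal_cons]; decide
  | true :: b :: r, h => by
      have hb : b = false := by
        rcases (List.isChain_cons_cons.mp h).1 with h' | h'
        · exact absurd h' (by simp)
        · exact h'
      subst hb
      have hr := fibVal_lt r (validFib_tail (validFib_tail h))
      have hf := Nat.fib_add_two (n := r.length + 2)
      have e1 := congrArg Nat.fib (show r.length + 1 + 1 + 2 = r.length + 2 + 2 by omega)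
      have e2 := congrArg Nat.fib (show r.length + 1 + 2 = r.length + 2 + 1 by omega)
      simp only [fibVal_cons, List.length_cons]
      norm_num
      omega

-- ## state predicates
def val2 (a b : ℤ) (m : ℕ) : ℤ := a * (Nat.fib (m + 2) : ℤ) + b * (Nat.fib (m + 1) : ℤ)

def Bdd (a b : ℤ) : Prop := |(a : ℝ) - gr * b| ≤ gr ^ 2

def Live (c : ℕ) (a b : ℤ) : Prop :=
  ∃ m : ℕ, |val2 a b m - (c : ℤ)| < (Nat.fib (m + 2) : ℤ)

def Sc (c : ℕ) : Set (ℤ × ℤ) := {p | Bdd p.1 p.2 ∧ Live c p.1 p.2}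

def bval (x : Bool) : ℤ := if x then 1 else 0

lemma abs_bval_sub (x y : Bool) : |bval y - bval x| ≤ 1 := by
  cases x <;> cases y <;> simp [bval]

lemma Bdd.step {a b e : ℤ} (h : Bdd a b) (he : |e| ≤ 1) : Bdd (a + b + e) a := by
  unfold Bdd at *
  have he' : |(e : ℝ)| ≤ 1 := by exact_mod_cast he
  have key : ((a + b + e : ℤ) : ℝ) - gr * (a : ℤ) = (gr - 1) * (gr * b - a) + e := by
    push_cast
    linear_combination (-(b:ℝ)) * gr_sq
  rw [key]
  rw [abs_le] at h he' ⊢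
  have h1 : (0:ℝ) < gr - 1 := by linarith [gr_gt]
  constructor <;>
    nlinarith [mul_le_mul_of_nonneg_left h.2 (le_of_lt h1),
      mul_le_mul_of_nonneg_left h.1 (le_of_lt h1), gr_sq]

lemma val2_succ (a b e : ℤ) (m : ℕ) :
    val2 a b (m + 1) + e * (Nat.fib (m + 2) : ℤ) = val2 (a + b + e) a m := by
  unfold val2
  have h : (Nat.fib (m + 1 + 2) : ℤ) = (Nat.fib (m + 1) : ℤ) + (Nat.fib (m + 2) : ℤ) := by
    exact_mod_cast Nat.fib_add_two (n := m + 1)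
  rw [h]; ring

lemma val2_zero (a b : ℤ) : val2 a b 0 = a + b := by
  unfold val2; norm_num

lemma fibVal_cons_int (x : Bool) (r : List Bool) :
    ((fibVal (x :: r) : ℤ)) = bval x * (Nat.fib (r.length + 2) : ℤ) + (fibVal r : ℤ) := by
  rw [fibVal_cons]; cases x <;> simp [bval]

end FibAux

noncomputable section

namespace FibAux

open Classical

abbrev StP (c : ℕ) := {p : ℤ × ℤ // p ∈ Sc c} × (Bool × Bool)

def trans (c : ℕ) (s : Option (StP c)) (xy : Bool × Bool) : Option (StP c) :=
  s.bind fun q =>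
    if h : (q.2.1 && xy.1) = false ∧ (q.2.2 && xy.2) = false ∧
        ((q.1.val.1 + q.1.val.2 + (bval xy.2 - bval xy.1), q.1.val.1) ∈ Sc c) then
      some (⟨(q.1.val.1 + q.1.val.2 + (bval xy.2 - bval xy.1), q.1.val.1), h.2.2⟩, xy)
    else none

def Mb (c : ℕ) : ℕ := 2 * (Nat.log 2 (c + 1) + 1)

lemma c_lt_gr_pow (c : ℕ) : (c : ℝ) < gr ^ (Mb c) := by
  have h1 : c + 1 < 2 ^ (Nat.log 2 (c + 1) + 1) := Nat.lt_pow_succ_log_self (by norm_num) (c + 1)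
  have h2 : (2 : ℝ) ^ (Nat.log 2 (c + 1) + 1) ≤ (gr ^ 2) ^ (Nat.log 2 (c + 1) + 1) := by
    apply pow_le_pow_left₀ (by norm_num)
    nlinarith [gr_sq, gr_gt]
  have h3 : ((c : ℝ) + 1) ≤ (2 : ℝ) ^ (Nat.log 2 (c + 1) + 1) := by
    exact_mod_cast Nat.le_of_lt h1
  have h4 : (gr ^ 2) ^ (Nat.log 2 (c + 1) + 1) = gr ^ (Mb c) := by
    rw [← pow_mul]; rfl
  linarith

lemma c_lt_fib (c : ℕ) : (c : ℤ) < (Nat.fib (Mb c + 2) : ℤ) := by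
  have h := (c_lt_gr_pow c).trans_le (gr_pow_le_fib (Mb c))
  exact_mod_cast h

lemma zero_mem (c : ℕ) : ((0, 0) : ℤ × ℤ) ∈ Sc c := by
  constructor
  · show |((0:ℤ) : ℝ) - gr * ((0:ℤ) : ℝ)| ≤ gr ^ 2
    simp
    positivity
  · exact ⟨Mb c, by simpa [val2] using c_lt_fib c⟩

def M (c : ℕ) : DFA (Bool × Bool) (Option (StP c)) where
  step := trans c
  start := some (⟨(0, 0), zero_mem c⟩, (false, false))
  accept := {s | Option.elim s False (fun q => q.1.1.1 + q.1.1.2 = (c : ℤ))}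

lemma M_step (c : ℕ) (s : Option (StP c)) (xy : Bool × Bool) :
    (M c).step s xy = trans c s xy := rfl

lemma trans_some (c : ℕ) (a b : ℤ) (hm : (a, b) ∈ Sc c) (lx ly x y : Bool) :
    trans c (some (⟨(a, b), hm⟩, (lx, ly))) (x, y) =
      if h : (lx && x) = false ∧ (ly && y) = false ∧
          ((a + b + (bval y - bval x), a) ∈ Sc c) then
        some (⟨(a + b + (bval y - bval x), a), h.2.2⟩, (x, y))
      else none := rfl

lemma evalFrom_none (c : ℕ) (w : List (Bool × Bool)) : (M c).evalFrom none w = none := by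
  induction w with
  | nil => rfl
  | cons a w ih =>
      show (M c).evalFrom ((M c).step none a) w = none
      exact ih

lemma none_not_accept (c : ℕ) : none ∉ (M c).accept := by
  simp [M, Option.elim]

lemma mem_accept_iff (c : ℕ) (q : StP c) :
    some q ∈ (M c).accept ↔ q.1.1.1 + q.1.1.2 = (c : ℤ) := by
  simp [M, Option.elim]

lemma necessity (c : ℕ) : ∀ (w : List (Bool × Bool)) (a b : ℤ) (hm : (a, b) ∈ Sc c)
    (lx ly : Bool),
    (M c).evalFrom (some (⟨(a, b), hm⟩, (lx, ly))) w ∈ (M c).accept →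
    ValidFib (lx :: w.map Prod.fst) ∧ ValidFib (ly :: w.map Prod.snd) ∧
      val2 a b w.length + ((fibVal (w.map Prod.snd) : ℤ) - (fibVal (w.map Prod.fst) : ℤ))
        = (c : ℤ)
  | [], a, b, hm, lx, ly => by
      intro h
      rw [DFA.evalFrom_nil, mem_accept_iff] at h
      refine ⟨List.isChain_singleton _, List.isChain_singleton _, ?_⟩
      simpa [val2_zero] using h
  | (x₀, y₀) :: w', a, b, hm, lx, ly => by
      intro h
      have hstep : (M c).evalFrom (some (⟨(a, b), hm⟩, (lx, ly))) ((x₀, y₀) :: w')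
          = (M c).evalFrom ((M c).step (some (⟨(a, b), hm⟩, (lx, ly))) (x₀, y₀)) w' := rfl
      rw [hstep] at h
      by_cases hc : (lx && x₀) = false ∧ (ly && y₀) = false ∧
          ((a + b + (bval y₀ - bval x₀), a) ∈ Sc c)
      · have hs : (M c).step (some (⟨(a, b), hm⟩, (lx, ly))) (x₀, y₀)
            = some (⟨(a + b + (bval y₀ - bval x₀), a), hc.2.2⟩, (x₀, y₀)) := by
          rw [M_step, trans_some, dif_pos hc]
        rw [hs] at h
        obtain ⟨h1, h2, h3⟩ := necessity c w' _ _ hc.2.2 x₀ y₀ h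
        refine ⟨?_, ?_, ?_⟩
        · rw [List.map_cons]
          exact List.isChain_cons_cons.mpr ⟨by revert hc; cases lx <;> cases x₀ <;> simp, h1⟩
        · rw [List.map_cons]
          exact List.isChain_cons_cons.mpr ⟨by revert hc; cases ly <;> cases y₀ <;> simp, h2⟩
        · rw [List.map_cons, List.map_cons]
          rw [List.length_cons]
          rw [fibVal_cons_int, fibVal_cons_int]
          have hv := val2_succ a b (bval y₀ - bval x₀) w'.length
          rw [List.length_map, List.length_map]
          linarith [h3, hv]
      · have hs : (M c).step (some (⟨(a, b), hm⟩, (lx, ly))) (x₀, y₀) = none := by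
          rw [M_step, trans_some, dif_neg hc]
        rw [hs, evalFrom_none] at h
        exact absurd h (none_not_accept c)

lemma sufficiency (c : ℕ) : ∀ (w : List (Bool × Bool)) (a b : ℤ) (hm : (a, b) ∈ Sc c)
    (lx ly : Bool),
    ValidFib (lx :: w.map Prod.fst) → ValidFib (ly :: w.map Prod.snd) →
    val2 a b w.length + ((fibVal (w.map Prod.snd) : ℤ) - (fibVal (w.map Prod.fst) : ℤ))
        = (c : ℤ) →
    (M c).evalFrom (some (⟨(a, b), hm⟩, (lx, ly))) w ∈ (M c).accept
  | [], a, b, hm, lx, ly => by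
      intro _ _ h3
      rw [DFA.evalFrom_nil, mem_accept_iff]
      simpa [val2_zero] using h3
  | (x₀, y₀) :: w', a, b, hm, lx, ly => by
      intro h1 h2 h3
      rw [List.map_cons] at h1 h2
      rw [List.map_cons, List.map_cons, List.length_cons, fibVal_cons_int, fibVal_cons_int,
        List.length_map, List.length_map] at h3
      -- the new state
      set a' := a + b + (bval y₀ - bval x₀) with ha'
      have hv := val2_succ a b (bval y₀ - bval x₀) w'.length
      have h3' : val2 a' a w'.length +
          ((fibVal (w'.map Prod.snd) : ℤ) - (fibVal (w'.map Prod.fst) : ℤ)) = (c : ℤ) := by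
        rw [← hv]; linarith [h3]
      have hxs : ValidFib (w'.map Prod.fst) := validFib_tail (validFib_tail h1)
      have hys : ValidFib (w'.map Prod.snd) := validFib_tail (validFib_tail h2)
      have hxlt : (fibVal (w'.map Prod.fst) : ℤ) < (Nat.fib (w'.length + 2) : ℤ) := by
        have := fibVal_lt _ hxs
        rw [List.length_map] at this
        exact_mod_cast this
      have hylt : (fibVal (w'.map Prod.snd) : ℤ) < (Nat.fib (w'.length + 2) : ℤ) := by
        have := fibVal_lt _ hys
        rw [List.length_map] at this
        exact_mod_cast this
      have hmem : (a', a) ∈ Sc c := by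
        constructor
        · exact Bdd.step hm.1 (abs_bval_sub x₀ y₀)
        · refine ⟨w'.length, ?_⟩
          rw [abs_lt]
          constructor <;>
            [nlinarith [h3', hylt, Int.ofNat_nonneg (fibVal (w'.map Prod.fst))];
             nlinarith [h3', hxlt, Int.ofNat_nonneg (fibVal (w'.map Prod.snd))]]
      have hc : (lx && x₀) = false ∧ (ly && y₀) = false ∧ ((a', a) ∈ Sc c) := by
        refine ⟨?_, ?_, hmem⟩
        · have := (List.isChain_cons_cons.mp h1).1
          revert this; cases lx <;> cases x₀ <;> simp
        · have := (List.isChain_cons_cons.mp h2).1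
          revert this; cases ly <;> cases y₀ <;> simp
      have hs : (M c).step (some (⟨(a, b), hm⟩, (lx, ly))) (x₀, y₀)
          = some (⟨(a', a), hc.2.2⟩, (x₀, y₀)) := by
        rw [M_step, trans_some, dif_pos hc]
      have hstep : (M c).evalFrom (some (⟨(a, b), hm⟩, (lx, ly))) ((x₀, y₀) :: w')
          = (M c).evalFrom ((M c).step (some (⟨(a, b), hm⟩, (lx, ly))) (x₀, y₀)) w' := rfl
      rw [hstep, hs]
      exact sufficiency c w' a' a hc.2.2 x₀ y₀ (List.isChain_cons_cons.mp h1).2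
        (List.isChain_cons_cons.mp h2).2 h3'

end FibAux

noncomputable section

namespace FibAux

open Classical

def mu (c m : ℕ) : ℝ := (c : ℝ) / gr ^ (m + 2)

lemma mu_nonneg (c m : ℕ) : 0 ≤ mu c m :=
  div_nonneg (Nat.cast_nonneg c) (le_of_lt (pow_pos gr_pos _))

lemma mu_le_one (c m : ℕ) (h : Mb c ≤ m) : mu c m ≤ 1 := by
  unfold mu
  rw [div_le_one (pow_pos gr_pos _)]
  exact le_of_lt (lt_of_lt_of_le (c_lt_gr_pow c)
    (pow_le_pow_right₀ (le_of_lt one_lt_gr) (by omega)))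

def Tbox (c m : ℕ) : Finset (ℤ × ℤ) :=
  Finset.Icc (⌊gr * mu c m⌋ - 12) (⌊gr * mu c m⌋ + 12) ×ˢ
    Finset.Icc (⌊mu c m⌋ - 6) (⌊mu c m⌋ + 6)

def Big (c : ℕ) : Finset (ℤ × ℤ) := (Finset.range (Mb c + 1)).biUnion (Tbox c)

lemma mem_Icc_floor {t : ℤ} {x r : ℝ} {k : ℤ} (h : |(t : ℝ) - x| ≤ r)
    (hk : r + 1 ≤ (k : ℝ)) : t ∈ Finset.Icc (⌊x⌋ - k) (⌊x⌋ + k) := by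
  rw [Finset.mem_Icc]
  rw [abs_le] at h
  have hf1 := Int.floor_le x
  have hf2 := Int.lt_floor_add_one x
  constructor
  · have : ((⌊x⌋ - k : ℤ) : ℝ) ≤ (t : ℝ) := by push_cast; linarith
    exact_mod_cast this
  · have : (t : ℝ) ≤ ((⌊x⌋ + k : ℤ) : ℝ) := by push_cast; linarith
    exact_mod_cast this

lemma abs_sub' (x y : ℝ) : |x - y| ≤ |x| + |y| := by
  calc |x - y| = |x + -y| := by rw [sub_eq_add_neg]
    _ ≤ |x| + |-y| := abs_add_le _ _
    _ = |x| + |y| := by rw [abs_neg]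

lemma b_window (c : ℕ) (a b : ℤ) (m : ℕ) (hB : Bdd a b)
    (hL : |val2 a b m - (c : ℤ)| < (Nat.fib (m + 2) : ℤ)) :
    |(b : ℝ) - mu c m| ≤ 2 * gr - 1 := by
  have hpow : (0 : ℝ) < gr ^ (m + 2) := pow_pos gr_pos _
  have hLr : |(a : ℝ) * (Nat.fib (m + 2) : ℝ) + (b : ℝ) * (Nat.fib (m + 1) : ℝ) - (c : ℝ)|
      ≤ (Nat.fib (m + 2) : ℝ) := by
    have h' := hL.le
    rw [show val2 a b m = a * ((Nat.fib (m + 2) : ℤ)) + b * ((Nat.fib (m + 1) : ℤ)) from rfl]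
      at h'
    exact_mod_cast h'
  have hδ : |(a : ℝ) - gr * b| ≤ gr ^ 2 := hB
  have hid : gr ^ (m + 2) = gr * (Nat.fib (m + 2) : ℝ) + (Nat.fib (m + 1) : ℝ) :=
    gr_pow_fib (m + 1)
  have hF2 : (Nat.fib (m + 2) : ℝ) ≤ gr ^ (m + 1) := fib_le_gr_pow (m + 1)
  have hF2' : (0 : ℝ) ≤ (Nat.fib (m + 2) : ℝ) := by positivity
  have key : (b : ℝ) * gr ^ (m + 2) - c =
      ((a : ℝ) * (Nat.fib (m + 2) : ℝ) + (b : ℝ) * (Nat.fib (m + 1) : ℝ) - (c : ℝ))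
        - ((a : ℝ) - gr * b) * (Nat.fib (m + 2) : ℝ) := by
    rw [hid]; ring
  have e1 : |((a : ℝ) - gr * b) * (Nat.fib (m + 2) : ℝ)| ≤ gr ^ 2 * (Nat.fib (m + 2) : ℝ) := by
    rw [abs_mul, abs_of_nonneg hF2']
    exact mul_le_mul_of_nonneg_right hδ hF2'
  have e2 : |(b : ℝ) * gr ^ (m + 2) - c| ≤ (1 + gr ^ 2) * (Nat.fib (m + 2) : ℝ) := by
    rw [key]
    calc |_ - _| ≤ _ + _ := abs_sub' _ _
      _ ≤ (Nat.fib (m + 2) : ℝ) + gr ^ 2 * (Nat.fib (m + 2) : ℝ) := add_le_add hLr e1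
      _ = (1 + gr ^ 2) * (Nat.fib (m + 2) : ℝ) := by ring
  have e3 : (1 + gr ^ 2) * (Nat.fib (m + 2) : ℝ) ≤ (2 * gr - 1) * gr ^ (m + 2) := by
    have h4 : (1 + gr ^ 2) * (Nat.fib (m + 2) : ℝ) ≤ (1 + gr ^ 2) * gr ^ (m + 1) :=
      mul_le_mul_of_nonneg_left hF2 (by nlinarith [gr_sq, gr_gt])
    have h5 : (1 + gr ^ 2) * gr ^ (m + 1) = (2 * gr - 1) * gr ^ (m + 2) := by
      have hs : gr ^ (m + 2) = gr * gr ^ (m + 1) := by ring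
      rw [hs]
      linear_combination (-(gr ^ (m + 1))) * gr_sq
    linarith
  have hdiv : (b : ℝ) - mu c m = ((b : ℝ) * gr ^ (m + 2) - c) / gr ^ (m + 2) := by
    unfold mu; field_simp
  rw [hdiv, abs_div, abs_of_pos hpow, div_le_iff₀ hpow]
  linarith [e2, e3]

lemma Sc_subset_Big (c : ℕ) : ∀ p ∈ Sc c, p ∈ Big c := by
  rintro ⟨a, b⟩ ⟨hB, m, hL⟩
  have hδ : |(a : ℝ) - gr * b| ≤ gr ^ 2 := hB
  rcases le_or_gt m (Mb c) with hm | hm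
  · refine Finset.mem_biUnion.mpr ⟨m, Finset.mem_range.mpr (by omega), ?_⟩
    have hb := b_window c a b m hB hL
    refine Finset.mem_product.mpr ⟨?_, ?_⟩
    · -- a component
      have ha : |(a : ℝ) - gr * mu c m| ≤ gr * (2 * gr - 1) + gr ^ 2 := by
        have hsplit : (a : ℝ) - gr * mu c m = ((a : ℝ) - gr * b) + gr * ((b : ℝ) - mu c m) := by
          ring
        rw [hsplit]
        calc |_ + _| ≤ |(a : ℝ) - gr * b| + |gr * ((b : ℝ) - mu c m)| := abs_add_le _ _
          _ ≤ gr ^ 2 + gr * (2 * gr - 1) := by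
              refine add_le_add hδ ?_
              rw [abs_mul, abs_of_pos gr_pos]
              exact mul_le_mul_of_nonneg_left hb (le_of_lt gr_pos)
          _ = gr * (2 * gr - 1) + gr ^ 2 := by ring
      exact mem_Icc_floor ha (by push_cast; nlinarith [gr_lt, gr_gt, gr_sq])
    · exact mem_Icc_floor hb (by push_cast; nlinarith [gr_lt, gr_gt])
  · refine Finset.mem_biUnion.mpr ⟨Mb c, Finset.mem_range.mpr (by omega), ?_⟩
    have hb := b_window c a b m hB hL
    have h1 : mu c m ≤ 1 := mu_le_one c m (by omega)
    have h2 : 0 ≤ mu c m := mu_nonneg c m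
    have h3 : mu c (Mb c) ≤ 1 := mu_le_one c (Mb c) le_rfl
    have h4 : 0 ≤ mu c (Mb c) := mu_nonneg c (Mb c)
    have hb' : |(b : ℝ) - mu c (Mb c)| ≤ 2 * gr := by
      have hsplit : (b : ℝ) - mu c (Mb c) = ((b : ℝ) - mu c m) + (mu c m - mu c (Mb c)) := by
        ring
      rw [hsplit]
      calc |_ + _| ≤ |(b : ℝ) - mu c m| + |mu c m - mu c (Mb c)| := abs_add_le _ _
        _ ≤ (2 * gr - 1) + 1 := add_le_add hb (abs_le.mpr ⟨by linarith, by linarith⟩)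
        _ = 2 * gr := by ring
    refine Finset.mem_product.mpr ⟨?_, ?_⟩
    · have ha : |(a : ℝ) - gr * mu c (Mb c)| ≤ gr * (2 * gr) + gr ^ 2 := by
        have hsplit : (a : ℝ) - gr * mu c (Mb c)
            = ((a : ℝ) - gr * b) + gr * ((b : ℝ) - mu c (Mb c)) := by ring
        rw [hsplit]
        calc |_ + _| ≤ |(a : ℝ) - gr * b| + |gr * ((b : ℝ) - mu c (Mb c))| := abs_add_le _ _
          _ ≤ gr ^ 2 + gr * (2 * gr) := by
              refine add_le_add hδ ?_
              rw [abs_mul, abs_of_pos gr_pos]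
              exact mul_le_mul_of_nonneg_left hb' (le_of_lt gr_pos)
          _ = gr * (2 * gr) + gr ^ 2 := by ring
      exact mem_Icc_floor ha (by push_cast; nlinarith [gr_lt, gr_gt, gr_sq])
    · exact mem_Icc_floor hb' (by push_cast; nlinarith [gr_lt, gr_gt])

lemma Tbox_card (c m : ℕ) : (Tbox c m).card ≤ 325 := by
  unfold Tbox
  rw [Finset.card_product, Int.card_Icc, Int.card_Icc]
  have e1 : (⌊gr * mu c m⌋ + 12 + 1 - (⌊gr * mu c m⌋ - 12)).toNat = 25 := by omega
  have e2 : (⌊mu c m⌋ + 6 + 1 - (⌊mu c m⌋ - 6)).toNat = 13 := by omega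
  rw [e1, e2]

lemma Big_card (c : ℕ) : (Big c).card ≤ 325 * (Mb c + 1) := by
  calc (Big c).card ≤ ∑ m ∈ Finset.range (Mb c + 1), (Tbox c m).card :=
        Finset.card_biUnion_le
    _ ≤ ∑ m ∈ Finset.range (Mb c + 1), 325 :=
        Finset.sum_le_sum (fun i _ => Tbox_card c i)
    _ = 325 * (Mb c + 1) := by
        rw [Finset.sum_const, Finset.card_range]; ring

end FibAux

end


theorem addition_const_state_complexity :
    ∃ C : ℕ, ∀ c : ℕ, ∃ (σ : Type) (_ : Fintype σ) (M : DFA (Bool × Bool) σ),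
      Fintype.card σ ≤ C * (Nat.log 2 (c + 1) + 1) ∧
      ∀ w : List (Bool × Bool),
        w ∈ M.accepts ↔
          ValidFib (w.map Prod.fst) ∧ ValidFib (w.map Prod.snd) ∧
            fibVal (w.map Prod.fst) + c = fibVal (w.map Prod.snd) := by
  refine ⟨4000, fun c => ?_⟩
  have hsub : ∀ p ∈ FibAux.Sc c, p ∈ FibAux.Big c := FibAux.Sc_subset_Big c
  have hfin : (FibAux.Sc c).Finite :=
    Set.Finite.subset (FibAux.Big c).finite_toSet (fun p hp => hsub p hp)
  haveI : Fintype {p : ℤ × ℤ // p ∈ FibAux.Sc c} := hfin.fintype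
  refine ⟨Option (FibAux.StP c), inferInstance, FibAux.M c, ?_, ?_⟩
  · have h1 : Fintype.card (Option (FibAux.StP c))
        = Fintype.card {p : ℤ × ℤ // p ∈ FibAux.Sc c} * 4 + 1 := by
      rw [Fintype.card_option, Fintype.card_prod, Fintype.card_prod, Fintype.card_bool]
    have h2 : Fintype.card {p : ℤ × ℤ // p ∈ FibAux.Sc c} ≤ (FibAux.Big c).card := by
      have := Fintype.card_le_of_injective
        (fun p : {p : ℤ × ℤ // p ∈ FibAux.Sc c} =>
          (⟨p.1, hsub p.1 p.2⟩ : {q : ℤ × ℤ // q ∈ FibAux.Big c}))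
        (by
          intro p q h
          have h' := congrArg (fun r : {q : ℤ × ℤ // q ∈ FibAux.Big c} => r.val) h
          exact Subtype.ext h')
      rwa [Fintype.card_coe] at this
    have h3 := FibAux.Big_card c
    have h4 : FibAux.Mb c = 2 * (Nat.log 2 (c + 1) + 1) := rfl
    omega
  · intro w
    rw [DFA.mem_accepts]
    constructor
    · intro h
      obtain ⟨h1, h2, h3⟩ :=
        FibAux.necessity c w 0 0 (FibAux.zero_mem c) false false h
      refine ⟨FibAux.validFib_tail h1, FibAux.validFib_tail h2, ?_⟩
      simp only [FibAux.val2, zero_mul, add_zero, zero_add] at h3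
      omega
    · rintro ⟨hx, hy, hsum⟩
      apply FibAux.sufficiency c w 0 0 (FibAux.zero_mem c) false false
      · exact List.isChain_cons.mpr ⟨fun b _ => Or.inl rfl, hx⟩
      · exact List.isChain_cons.mpr ⟨fun b _ => Or.inl rfl, hy⟩
      · simp only [FibAux.val2, zero_mul, add_zero, zero_add]
        omega
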